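/- Let V > 0 and c > 0, set θ₀ = arctan( H(0) / √(V c) ), and let H : [0, T) → R be a differentiable function satisfying H'(t) + H(t)²/V ≤ −c for all t ∈ [0, T). Then for every t ∈ [0, T) with √(c/V) t − θ₀ < π/2, one has H(t) ≤ −√(V c) · tan( √(c/V) t − θ₀ ). -/

import Mathlib

open Real Set

/-- Let `V > 0`, `c > 0`, `θ₀ = arctan(H(0)/√(Vc))`, and let
`H : [0,T) → ℝ` be differentiable with `H'(t) + H(t)²/V ≤ −c` on `[0,T)`. Then for
every `t ∈ [0,T)` with `√(c/V) t − θ₀ < π/2`, one has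
`H(t) ≤ −√(Vc) · tan(√(c/V) t − θ₀)`. -/
theorem riccati_inequality_comparison
    (V c T : ℝ) (hV : 0 < V) (hc : 0 < c) (H : ℝ → ℝ)
    (hdiff : ∀ t ∈ Ico (0 : ℝ) T, DifferentiableAt ℝ H t)
    (hineq : ∀ t ∈ Ico (0 : ℝ) T, deriv H t + (H t) ^ 2 / V ≤ -c) :
    ∀ t ∈ Ico (0 : ℝ) T,
      Real.sqrt (c / V) * t - Real.arctan (H 0 / Real.sqrt (V * c)) < π / 2 →
      H t ≤ -Real.sqrt (V * c) *
        Real.tan (Real.sqrt (c / V) * t - Real.arctan (H 0 / Real.sqrt (V * c))) := by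
  intro t ht hlt
  set s := Real.sqrt (V * c) with hs
  set k := Real.sqrt (c / V) with hk
  have hs0 : 0 < s := Real.sqrt_pos.mpr (by positivity)
  have hk0 : 0 < k := Real.sqrt_pos.mpr (by positivity)
  have hsk : s * k = c := by
    rw [hs, hk, ← Real.sqrt_mul (by positivity)]
    rw [show V * c * (c / V) = c ^ 2 by field_simp]
    exact Real.sqrt_sq hc.le
  have hs2 : s ^ 2 = V * c := Real.sq_sqrt (by positivity)
  set g : ℝ → ℝ := fun x => Real.arctan (H x / s) + k * x with hg
  have hderiv : ∀ x ∈ Ico (0:ℝ) T,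
      HasDerivAt g (1 / (1 + (H x / s) ^ 2) * (deriv H x / s) + k) x := by
    intro x hx
    have h1 : HasDerivAt (fun y => H y / s) (deriv H x / s) x :=
      ((hdiff x hx).hasDerivAt).div_const s
    have h2 := (Real.hasDerivAt_arctan (H x / s)).comp x h1
    have h3 : HasDerivAt (fun y : ℝ => k * y) k x := by
      simpa using (hasDerivAt_id x).const_mul k
    exact h2.add h3
  have hderiv_nonpos : ∀ x ∈ Ico (0:ℝ) T, deriv g x ≤ 0 := by
    intro x hx
    rw [(hderiv x hx).deriv]
    have hd := hineq x hx
    have hdH : deriv H x ≤ -c - (H x) ^ 2 / V := by linarith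
    have hpos : (0:ℝ) < 1 + (H x / s) ^ 2 := by positivity
    have key : -c - (H x) ^ 2 / V = -(s * k) * (1 + (H x / s) ^ 2) := by
      have h1 : (H x / s) ^ 2 = H x ^ 2 / (V * c) := by rw [div_pow, hs2]
      rw [h1, hsk]
      field_simp
      ring
    rw [key] at hdH
    have : deriv H x / s ≤ -k * (1 + (H x / s) ^ 2) := by
      rw [div_le_iff₀ hs0]
      calc deriv H x ≤ -(s * k) * (1 + (H x / s) ^ 2) := hdH
        _ = -k * (1 + (H x / s) ^ 2) * s := by ring
    have := mul_le_mul_of_nonneg_left this (le_of_lt (one_div_pos.mpr hpos))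
    calc 1 / (1 + (H x / s) ^ 2) * (deriv H x / s) + k
        ≤ 1 / (1 + (H x / s) ^ 2) * (-k * (1 + (H x / s) ^ 2)) + k := by linarith
      _ = 0 := by field_simp; ring
  have key : g t ≤ g 0 := by
    have hsub : Icc (0:ℝ) t ⊆ Ico 0 T := fun x hx => ⟨hx.1, lt_of_le_of_lt hx.2 ht.2⟩
    have hanti : AntitoneOn g (Icc 0 t) := by
      apply antitoneOn_of_deriv_nonpos (convex_Icc 0 t)
      · intro x hx
        exact ((hderiv x (hsub hx)).differentiableAt).continuousAt.continuousWithinAt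
      · intro x hx
        rw [interior_Icc] at hx
        exact ((hderiv x (hsub (Ioo_subset_Icc_self hx))).differentiableAt).differentiableWithinAt
      · intro x hx
        rw [interior_Icc] at hx
        exact hderiv_nonpos x (hsub (Ioo_subset_Icc_self hx))
    exact hanti (left_mem_Icc.mpr ht.1) (right_mem_Icc.mpr ht.1) ht.1
  have harc : Real.arctan (H t / s) ≤ -(k * t - Real.arctan (H 0 / s)) := by
    simp only [hg] at key
    linarith
  set a := k * t - Real.arctan (H 0 / s) with ha
  have ha_lo : -(π / 2) < a := by
    have h1 : Real.arctan (H 0 / s) < π / 2 := Real.arctan_lt_pi_div_two _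
    have h2 : 0 ≤ k * t := mul_nonneg hk0.le ht.1
    simp only [ha]; linarith
  have hmem1 : Real.arctan (H t / s) ∈ Ioo (-(π / 2)) (π / 2) :=
    ⟨Real.neg_pi_div_two_lt_arctan _, Real.arctan_lt_pi_div_two _⟩
  have hmem2 : -a ∈ Ioo (-(π / 2)) (π / 2) := ⟨by linarith, by linarith⟩
  have htan : Real.tan (Real.arctan (H t / s)) ≤ Real.tan (-a) :=
    Real.strictMonoOn_tan.monotoneOn hmem1 hmem2 harc
  rw [Real.tan_arctan, Real.tan_neg] at htan
  have : H t ≤ -Real.tan a * s := by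
    rw [← div_le_iff₀ hs0]; linarith
  calc H t ≤ -Real.tan a * s := this
    _ = -s * Real.tan a := by ring
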